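/- arXiv:1909.09257 — 2 statements merged into one kernel-verified Lean document; each statement's English description precedes it below -/
import Mathlib

section
/- Let T > 0, β > 0, α ∈ ℝ, let I be a finite set, let c : I → ℝ, Δ : I → ℝ and q̄ > 0. Let u : [0,T] × ℝ → ℝ be such that u(t,Q) < 0 for all (t,Q) and t ↦ u(t,Q) is differentiable for each Q, and define ũ(t,Q) = (−u(t,Q))^{−β}. Then the following are equivalent: (i) for all (t,Q) ∈ [0,T] × ℝ, ∂_t u(t,Q) + α u(t,Q) Q² − u(t,Q) Σ_{i∈I} Σ_{s∈{−1,1}} c_i ((−u(t,Q))/(−u(t,Q − sΔ_i)))^β · 1_{sQ > −q̄} = 0 and u(T,Q) = −1; (ii) for all (t,Q) ∈ [0,T] × ℝ, ∂_t ũ(t,Q) − αβ ũ(t,Q) Q² + β Σ_{i∈I} Σ_{s∈{−1,1}} c_i ũ(t,Q − sΔ_i) · 1_{sQ > −q̄} = 0 and ũ(T,Q) = 1. -/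
open MeasureTheory

private lemma key_rpow (β : ℝ) {x y : ℝ} (hx : 0 < x) (hy : 0 < y) :
    x ^ (-β) * (x / y) ^ β = y ^ (-β) := by
  rw [Real.div_rpow hx.le hy.le, Real.rpow_neg hx.le, Real.rpow_neg hy.le]
  have hxβ : x ^ β ≠ 0 := (Real.rpow_pos_of_pos hx β).ne'
  field_simp

private lemma rpow_one_of_eq_one (β : ℝ) (hβ : 0 < β) {x : ℝ} (hx : 0 < x)
    (h : x ^ (-β) = 1) : x = 1 := by
  have hlog : Real.log (x ^ (-β)) = -β * Real.log x := Real.log_rpow hx _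
  rw [h, Real.log_one] at hlog
  have : Real.log x = 0 := by
    rcases mul_eq_zero.mp hlog.symm with h1 | h1
    · linarith
    · exact h1
  rcases Real.log_eq_zero.mp this with h1 | h1 | h1
  · linarith
  · exact h1
  · linarith

/-- **Linearization of the exchange's HJB equation by the change of variables
`ũ = (−u)^{−β}`.**
Let `T > 0`, `β > 0`, `α ∈ ℝ`, `I` a finite set, `c, Δ : I → ℝ`, `q̄ > 0`, and let
`u : [0,T] × ℝ → ℝ` be negative and differentiable in time. Then `u` solves the
nonlinear HJB equation
`∂_t u + α u Q² − u Σ_{i,s} c_i ((−u(t,Q))/(−u(t,Q − sΔ_i)))^β 1_{sQ > −q̄} = 0`,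
`u(T,·) = −1`, if and only if `ũ = (−u)^{−β}` solves the linear equation
`∂_t ũ − αβ ũ Q² + β Σ_{i,s} c_i ũ(t, Q − sΔ_i) 1_{sQ > −q̄} = 0`, `ũ(T,·) = 1`. -/
theorem hjb_linearization_equiv
    (T β : ℝ) (hT : 0 < T) (hβ : 0 < β) (α : ℝ)
    (I : Type*) [Fintype I] (c Δ : I → ℝ) (qbar : ℝ) (hqbar : 0 < qbar)
    (u : ℝ → ℝ → ℝ)
    (hneg : ∀ t ∈ Set.Icc (0 : ℝ) T, ∀ Q : ℝ, u t Q < 0)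
    (hdiff : ∀ Q : ℝ, ∀ t ∈ Set.Icc (0 : ℝ) T, DifferentiableAt ℝ (fun s => u s Q) t) :
    ((∀ Q : ℝ, ∀ t ∈ Set.Icc (0 : ℝ) T,
        deriv (fun s => u s Q) t + α * u t Q * Q ^ 2
          - u t Q * ∑ i : I, ∑ s ∈ ({-1, 1} : Finset ℝ),
              c i * ((-u t Q) / (-u t (Q - s * Δ i))) ^ β
                * (if -qbar < s * Q then (1 : ℝ) else 0) = 0)
      ∧ (∀ Q : ℝ, u T Q = -1))
    ↔ ((∀ Q : ℝ, ∀ t ∈ Set.Icc (0 : ℝ) T,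
        deriv (fun s => (-u s Q) ^ (-β)) t - α * β * (-u t Q) ^ (-β) * Q ^ 2
          + β * ∑ i : I, ∑ s ∈ ({-1, 1} : Finset ℝ),
              c i * (-u t (Q - s * Δ i)) ^ (-β)
                * (if -qbar < s * Q then (1 : ℝ) else 0) = 0)
      ∧ (∀ Q : ℝ, (-u T Q) ^ (-β) = 1)) := by
  have hTmem : T ∈ Set.Icc (0 : ℝ) T := ⟨hT.le, le_rfl⟩
  have hpos : ∀ t ∈ Set.Icc (0 : ℝ) T, ∀ Q : ℝ, 0 < -u t Q :=
    fun t ht Q => neg_pos.mpr (hneg t ht Q)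
  -- derivative of the transformed function
  have hderiv : ∀ Q : ℝ, ∀ t ∈ Set.Icc (0 : ℝ) T,
      deriv (fun s => (-u s Q) ^ (-β)) t
        = β * (-u t Q) ^ (-β - 1) * deriv (fun s => u s Q) t := by
    intro Q t ht
    have h1 := (hdiff Q t ht).hasDerivAt
    have h2 : HasDerivAt (fun s => -u s Q) (-(deriv (fun s => u s Q) t)) t := h1.neg
    have h3 := h2.rpow_const (p := -β) (Or.inl (hpos t ht Q).ne')
    have := h3.deriv
    rw [this]; ring
  -- key identity: linear LHS = β * (-u)^{-β-1} * nonlinear LHS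
  have hmain : ∀ Q : ℝ, ∀ t ∈ Set.Icc (0 : ℝ) T,
      deriv (fun s => (-u s Q) ^ (-β)) t - α * β * (-u t Q) ^ (-β) * Q ^ 2
          + β * ∑ i : I, ∑ s ∈ ({-1, 1} : Finset ℝ),
              c i * (-u t (Q - s * Δ i)) ^ (-β)
                * (if -qbar < s * Q then (1 : ℝ) else 0)
        = β * (-u t Q) ^ (-β - 1) *
          (deriv (fun s => u s Q) t + α * u t Q * Q ^ 2
            - u t Q * ∑ i : I, ∑ s ∈ ({-1, 1} : Finset ℝ),
                c i * ((-u t Q) / (-u t (Q - s * Δ i))) ^ β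
                  * (if -qbar < s * Q then (1 : ℝ) else 0)) := by
    intro Q t ht
    have hA : 0 < -u t Q := hpos t ht Q
    have hAm : (-u t Q) ^ (-β - 1) * (-u t Q) = (-u t Q) ^ (-β) := by
      nth_rewrite 2 [show (-u t Q) = (-u t Q) ^ (1 : ℝ) by rw [Real.rpow_one]]
      rw [← Real.rpow_add hA]; ring_nf
    have hsum : (-u t Q) ^ (-β) * (∑ i : I, ∑ s ∈ ({-1, 1} : Finset ℝ),
          c i * ((-u t Q) / (-u t (Q - s * Δ i))) ^ β
            * (if -qbar < s * Q then (1 : ℝ) else 0))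
        = ∑ i : I, ∑ s ∈ ({-1, 1} : Finset ℝ),
            c i * (-u t (Q - s * Δ i)) ^ (-β)
              * (if -qbar < s * Q then (1 : ℝ) else 0) := by
      rw [Finset.mul_sum]
      refine Finset.sum_congr rfl fun i _ => ?_
      rw [Finset.mul_sum]
      refine Finset.sum_congr rfl fun s _ => ?_
      have hB : 0 < -u t (Q - s * Δ i) := hpos t ht _
      have := key_rpow β hA hB
      calc (-u t Q) ^ (-β) * (c i * ((-u t Q) / (-u t (Q - s * Δ i))) ^ β
              * (if -qbar < s * Q then (1 : ℝ) else 0))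
          = c i * ((-u t Q) ^ (-β) * ((-u t Q) / (-u t (Q - s * Δ i))) ^ β)
              * (if -qbar < s * Q then (1 : ℝ) else 0) := by ring
        _ = _ := by rw [this]
    rw [hderiv Q t ht]
    have hu : u t Q = -(-u t Q) := by ring
    rw [mul_sub, mul_add]
    rw [show β * (-u t Q) ^ (-β - 1) * (α * u t Q * Q ^ 2)
          = -(α * β * ((-u t Q) ^ (-β - 1) * (-u t Q)) * Q ^ 2) by ring]
    rw [show β * (-u t Q) ^ (-β - 1) * (u t Q * (∑ i : I, ∑ s ∈ ({-1, 1} : Finset ℝ),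
              c i * ((-u t Q) / (-u t (Q - s * Δ i))) ^ β
                * (if -qbar < s * Q then (1 : ℝ) else 0)))
          = -(β * (((-u t Q) ^ (-β - 1) * (-u t Q)) * (∑ i : I, ∑ s ∈ ({-1, 1} : Finset ℝ),
              c i * ((-u t Q) / (-u t (Q - s * Δ i))) ^ β
                * (if -qbar < s * Q then (1 : ℝ) else 0)))) by ring]
    rw [hAm, hsum]
    ring
  constructor
  · rintro ⟨heq, hterm⟩
    refine ⟨fun Q t ht => ?_, fun Q => ?_⟩
    · rw [hmain Q t ht, heq Q t ht, mul_zero]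
    · rw [show -u T Q = 1 by rw [hterm Q]; ring, Real.one_rpow]
  · rintro ⟨heq, hterm⟩
    have hterm' : ∀ Q : ℝ, u T Q = -1 := by
      intro Q
      have := rpow_one_of_eq_one β hβ (hpos T hTmem Q) (hterm Q)
      linarith
    refine ⟨fun Q t ht => ?_, hterm'⟩
    have h := heq Q t ht
    rw [hmain Q t ht] at h
    have hcoef : β * (-u t Q) ^ (-β - 1) ≠ 0 :=
      mul_ne_zero hβ.ne' (Real.rpow_pos_of_pos (hpos t ht Q) _).ne'
    exact (mul_eq_zero.mp h).resolve_left hcoef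
end

section
/- Let T > 0, β > 0, α ∈ ℝ, let I be a finite set, c : I → ℝ, Δ : I → ℝ, q̄ > 0, and let u : [0,T] × ℝ → ℝ be everywhere negative, differentiable in t, and satisfy for all (t,Q): ∂_t u(t,Q) + α u(t,Q) Q² − u(t,Q) Σ_{i∈I} Σ_{s∈{−1,1}} c_i ((−u(t,Q))/(−u(t,Q − sΔ_i)))^β 1_{sQ > −q̄} = 0 with u(T,·) = −1. Define v : [0,T] × ℝ^I → ℝ by v(t,q) = u(t, Σ_{i∈I} Δ_i q_i). Then v is everywhere negative, differentiable in t, v(T,·) = −1, and for all (t,q) ∈ [0,T] × ℝ^I: ∂_t v(t,q) + α v(t,q) (Σ_{i∈I} Δ_i q_i)² − v(t,q) Σ_{i∈I} Σ_{s∈{−1,1}} c_i ((−v(t,q))/(−v(t, q − s e_i)))^β 1_{s Σ_{j∈I} Δ_j q_j > −q̄} = 0, where q − s e_i denotes the vector q with its i-th coordinate decreased by s. -/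
open MeasureTheory

lemma sum_update_delta {I : Type*} [Fintype I] [DecidableEq I] (Δ q : I → ℝ) (i : I) (s : ℝ) :
    (∑ j : I, Δ j * Function.update q i (q i - s) j) = (∑ j : I, Δ j * q j) - s * Δ i := by
  have h1 : (fun j => Δ j * Function.update q i (q i - s) j)
      = Function.update (fun j => Δ j * q j) i (Δ i * (q i - s)) := by
    funext j
    by_cases h : j = i
    · subst h; simp
    · simp [Function.update_of_ne h]
  rw [h1, Finset.sum_update_of_mem (Finset.mem_univ i)]
  rw [show (∑ j : I, Δ j * q j)
      = Δ i * q i + ∑ j ∈ Finset.univ.erase i, Δ j * q j from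
    (Finset.add_sum_erase _ _ (Finset.mem_univ i)).symm,
    show (Finset.univ \ {i} : Finset I) = Finset.univ.erase i by
      rw [Finset.erase_eq]]
  ring

/-- **Aggregation ansatz: a solution of the one-dimensional reduced HJB yields a
solution of the multi-dimensional HJB via the delta-weighted inventory.**
Let `T > 0`, `β > 0`, `α ∈ ℝ`, `I` a finite set, `c, Δ : I → ℝ`, `q̄ > 0`, and let
`u : [0,T] × ℝ → ℝ` be negative, differentiable in time, with `u(T,·) = −1`, solving
`∂_t u + α u Q² − u Σ_{i,s} c_i ((−u(t,Q))/(−u(t,Q − sΔ_i)))^β 1_{sQ > −q̄} = 0`.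
Then `v(t,q) = u(t, Σ_i Δ_i q_i)` is negative, differentiable in time, satisfies
`v(T,·) = −1`, and solves the multi-dimensional HJB equation where the `i`-th jump
decreases the `i`-th coordinate of `q` by `s`. -/
theorem hjb_aggregation_ansatz
    (T β : ℝ) (hT : 0 < T) (hβ : 0 < β) (α : ℝ)
    (I : Type*) [Fintype I] [DecidableEq I] (c Δ : I → ℝ) (qbar : ℝ) (hqbar : 0 < qbar)
    (u : ℝ → ℝ → ℝ)
    (hneg : ∀ t ∈ Set.Icc (0 : ℝ) T, ∀ Q : ℝ, u t Q < 0)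
    (hdiff : ∀ Q : ℝ, ∀ t ∈ Set.Icc (0 : ℝ) T, DifferentiableAt ℝ (fun s => u s Q) t)
    (hpde : ∀ Q : ℝ, ∀ t ∈ Set.Icc (0 : ℝ) T,
      deriv (fun s => u s Q) t + α * u t Q * Q ^ 2
        - u t Q * ∑ i : I, ∑ s ∈ ({-1, 1} : Finset ℝ),
            c i * ((-u t Q) / (-u t (Q - s * Δ i))) ^ β
              * (if -qbar < s * Q then (1 : ℝ) else 0) = 0)
    (hterm : ∀ Q : ℝ, u T Q = -1)
    (v : ℝ → (I → ℝ) → ℝ)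
    (hv : ∀ (t : ℝ) (q : I → ℝ), v t q = u t (∑ i : I, Δ i * q i)) :
    (∀ t ∈ Set.Icc (0 : ℝ) T, ∀ q : I → ℝ, v t q < 0)
      ∧ (∀ q : I → ℝ, ∀ t ∈ Set.Icc (0 : ℝ) T,
          DifferentiableAt ℝ (fun s => v s q) t)
      ∧ (∀ q : I → ℝ, v T q = -1)
      ∧ (∀ t ∈ Set.Icc (0 : ℝ) T, ∀ q : I → ℝ,
          deriv (fun s => v s q) t + α * v t q * (∑ i : I, Δ i * q i) ^ 2
            - v t q * ∑ i : I, ∑ s ∈ ({-1, 1} : Finset ℝ),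
                c i * ((-v t q) / (-v t (Function.update q i (q i - s)))) ^ β
                  * (if -qbar < s * ∑ j : I, Δ j * q j then (1 : ℝ) else 0) = 0) := by
  have hfun : ∀ q : I → ℝ, (fun s => v s q) = (fun s => u s (∑ i : I, Δ i * q i)) := by
    intro q; funext s; exact hv s q
  refine ⟨fun t ht q => by rw [hv]; exact hneg t ht _,
    fun q t ht => by rw [hfun]; exact hdiff _ t ht,
    fun q => by rw [hv]; exact hterm _, ?_⟩
  intro t ht q
  have key := hpde (∑ i : I, Δ i * q i) t ht
  have hsums : (∑ i : I, ∑ s ∈ ({-1, 1} : Finset ℝ),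
        c i * ((-v t q) / (-v t (Function.update q i (q i - s)))) ^ β
          * (if -qbar < s * ∑ j : I, Δ j * q j then (1 : ℝ) else 0))
      = ∑ i : I, ∑ s ∈ ({-1, 1} : Finset ℝ),
        c i * ((-u t (∑ j : I, Δ j * q j))
            / (-u t ((∑ j : I, Δ j * q j) - s * Δ i))) ^ β
          * (if -qbar < s * ∑ j : I, Δ j * q j then (1 : ℝ) else 0) := by
    refine Finset.sum_congr rfl fun i _ => Finset.sum_congr rfl fun s _ => ?_
    rw [hv, hv, sum_update_delta]
  rw [hsums, hfun, hv]
  exact key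
end
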